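/- Let α ∈ (0,1) and J ≥ 1. Let F₁,…,F_J be nonempty convex classes of functions ℝ^k → ℝ with F_j ⊆ F_J for every j, let L be a linear functional defined on a vector space of functions containing F_J, and fix design points x₁,…,x_n ∈ ℝ^k and σ : ℝ^k → (0,∞). Suppose {P_f : f ∈ F_J} is a family of probability measures on a common measurable space and, for each j = 1,…,J, ĉ^{ℓ,j} and ĉ^{u,j} are integrable real-valued random variables satisfying sup_{f∈F_j} E_{P_f}[Lf − ĉ^{ℓ,j}] ≤ ω(z_{1−α/(2J)}, F_J, F_j) and sup_{f∈F_j} E_{P_f}[ĉ^{u,j} − Lf] ≤ ω(z_{1−α/(2J)}, F_j, F_J). Then for every j = 1,…,J, sup_{f∈F_j} E_{P_f}[ min_{1≤ℓ≤J} ĉ^{u,ℓ} − max_{1≤ℓ≤J} ĉ^{ℓ,ℓ} ] ≤ (2 z_{1−α/(2J)} / z_{1−α/2}) · ω₊(z_{1−α/2}, F_j, F_J). -/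

import Mathlib

open MeasureTheory Filter Finset

/-- The `q`-quantile of the standard normal distribution. -/
noncomputable def gaussQuantile (q : ℝ) : ℝ :=
  sInf {t : ℝ | q ≤ ((ProbabilityTheory.gaussianReal 0 1) (Set.Iic t)).toReal}

/-- Ordered modulus of continuity for a linear functional `L` with noise scale `σ`. -/
noncomputable def ordModL {k : ℕ} (n : ℕ) (x : Fin n → (Fin k → ℝ))
    (σ : (Fin k → ℝ) → ℝ) (L : ((Fin k → ℝ) → ℝ) →ₗ[ℝ] ℝ) (δ : ℝ)
    (F G : Set ((Fin k → ℝ) → ℝ)) : ℝ :=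
  sSup {d : ℝ | ∃ f ∈ F, ∃ g ∈ G,
    (∑ i, ((g (x i) - f (x i)) / σ (x i)) ^ 2) ≤ δ ^ 2 ∧ d = L g - L f}

/-- Between-class modulus of continuity for a linear functional `L`. -/
noncomputable def betModL {k : ℕ} (n : ℕ) (x : Fin n → (Fin k → ℝ))
    (σ : (Fin k → ℝ) → ℝ) (L : ((Fin k → ℝ) → ℝ) →ₗ[ℝ] ℝ) (δ : ℝ)
    (F G : Set ((Fin k → ℝ) → ℝ)) : ℝ :=
  sSup {d : ℝ | ∃ f ∈ F, ∃ g ∈ G,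
    (∑ i, ((g (x i) - f (x i)) / σ (x i)) ^ 2) ≤ δ ^ 2 ∧ d = |L g - L f|}

open ProbabilityTheory in
lemma gaussQuantile_eq (q : ℝ) :
    gaussQuantile q = sInf {t : ℝ | q ≤ cdf (gaussianReal 0 1) t} := by
  unfold gaussQuantile
  congr 1
  ext t
  simp [cdf_eq_real, measureReal_def]

open ProbabilityTheory in
lemma gauss_cdf_zero : cdf (gaussianReal 0 1) 0 = 1/2 := by
  set Γ := gaussianReal 0 1 with hΓ
  have hmap : Γ.map (fun x : ℝ => (-1 : ℝ) * x) = Γ := by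
    rw [hΓ, gaussianReal_map_const_mul (-1)]
    norm_num
  have hpre : (fun x : ℝ => (-1:ℝ)*x) ⁻¹' (Set.Iic 0) = Set.Ici 0 := by
    ext y
    simp [neg_nonpos]
  have h1 : Γ (Set.Iic 0) = Γ (Set.Ici 0) := by
    conv_lhs => rw [← hmap]
    rw [Measure.map_apply (by fun_prop) measurableSet_Iic, hpre]
  have h0 : Γ {(0:ℝ)} = 0 :=
    gaussianReal_absolutelyContinuous 0 one_ne_zero Real.volume_singleton
  have h2 : Γ (Set.Ici 0) = Γ (Set.Ioi 0) := by
    rw [← Set.Ioi_union_left, measure_union (by simp) (measurableSet_singleton 0), h0, add_zero]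
  have h3 : Γ (Set.Ioi 0) = 1 - Γ (Set.Iic 0) := by
    rw [← Set.compl_Iic, measure_compl measurableSet_Iic (measure_ne_top _ _), measure_univ]
  have h4 : Γ (Set.Iic 0) = 1 - Γ (Set.Iic 0) := (h1.trans h2).trans h3
  have h5 : (Γ (Set.Iic 0)).toReal = 1 - (Γ (Set.Iic 0)).toReal := by
    conv_lhs => rw [h4]
    rw [ENNReal.toReal_sub_of_le prob_le_one ENNReal.one_ne_top]
    simp
  rw [cdf_eq_real, measureReal_def]
  linarith

open ProbabilityTheory in
lemma gauss_lb {q : ℝ} (hq : 1/2 < q) :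
    ∃ ε > (0:ℝ), ∀ t : ℝ, q ≤ cdf (gaussianReal 0 1) t → ε ≤ t := by
  have hc : ContinuousWithinAt (cdf (gaussianReal 0 1)) (Set.Ici 0) 0 :=
    (cdf (gaussianReal 0 1)).right_continuous 0
  have hlt : ∀ᶠ t in nhdsWithin 0 (Set.Ici 0), cdf (gaussianReal 0 1) t < q :=
    hc.eventually (eventually_lt_nhds (by rw [gauss_cdf_zero]; exact hq))
  have hlt' : ∀ᶠ t in nhdsWithin 0 (Set.Ioi 0), cdf (gaussianReal 0 1) t < q :=
    hlt.filter_mono (nhdsWithin_mono _ Set.Ioi_subset_Ici_self)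
  obtain ⟨ε, hεq, hε0⟩ := (hlt'.and eventually_mem_nhdsWithin).exists
  refine ⟨ε, hε0, fun t ht => ?_⟩
  by_contra hcon
  push_neg at hcon
  exact absurd (le_trans ht (monotone_cdf _ hcon.le)) (not_le.mpr hεq)

open ProbabilityTheory in
lemma gauss_nonempty {q : ℝ} (hq1 : q < 1) :
    {t : ℝ | q ≤ cdf (gaussianReal 0 1) t}.Nonempty := by
  obtain ⟨t, ht⟩ := ((tendsto_cdf_atTop (gaussianReal 0 1)).eventually
    (eventually_ge_nhds hq1)).exists
  exact ⟨t, ht⟩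

lemma gaussQuantile_pos {q : ℝ} (hq : 1/2 < q) (hq1 : q < 1) : 0 < gaussQuantile q := by
  rw [gaussQuantile_eq]
  obtain ⟨ε, hε0, hub⟩ := gauss_lb hq
  exact lt_of_lt_of_le hε0 (le_csInf (gauss_nonempty hq1) fun t ht => hub t ht)

lemma gaussQuantile_mono {q q' : ℝ} (hq : 1/2 < q) (hle : q ≤ q') (hq1 : q' < 1) :
    gaussQuantile q ≤ gaussQuantile q' := by
  rw [gaussQuantile_eq, gaussQuantile_eq]
  obtain ⟨ε, _, hub⟩ := gauss_lb hq
  exact csInf_le_csInf ⟨ε, fun t ht => hub t ht⟩ (gauss_nonempty hq1)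
    (fun t ht => le_trans hle ht)

lemma integrable_finset_inf' {Ω ι : Type*} [MeasurableSpace Ω] {μ : Measure Ω}
    {s : Finset ι} (hs : s.Nonempty) (g : ι → Ω → ℝ)
    (h : ∀ i ∈ s, Integrable (g i) μ) :
    Integrable (fun ω => s.inf' hs fun i => g i ω) μ := by
  induction hs using Finset.Nonempty.cons_induction with
  | singleton a => simpa using h a (by simp)
  | cons a s ha hs ih =>
      simp only [Finset.inf'_cons (H := hs)]
      exact (h a (by simp)).inf (ih fun i hi => h i (Finset.mem_cons_of_mem hi))

lemma integrable_finset_sup' {Ω ι : Type*} [MeasurableSpace Ω] {μ : Measure Ω}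
    {s : Finset ι} (hs : s.Nonempty) (g : ι → Ω → ℝ)
    (h : ∀ i ∈ s, Integrable (g i) μ) :
    Integrable (fun ω => s.sup' hs fun i => g i ω) μ := by
  induction hs using Finset.Nonempty.cons_induction with
  | singleton a => simpa using h a (by simp)
  | cons a s ha hs ih =>
      simp only [Finset.sup'_cons (H := hs)]
      exact (h a (by simp)).sup (ih fun i hi => h i (Finset.mem_cons_of_mem hi))

/-- gaussQuantile facts assumed proven elsewhere; here as hypotheses for testing. -/
theorem stmt_7_aux {k : ℕ} (Ω : Type*) [MeasurableSpace Ω]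
    (J : ℕ) (hJ : 0 < J) (δ δ' : ℝ) (hδpos : 0 < δ) (hδδ' : δ ≤ δ')
    (F : Fin J → Set ((Fin k → ℝ) → ℝ)) (jJ : Fin J)
    (hne : ∀ j, (F j).Nonempty) (hconv : ∀ j, Convex ℝ (F j))
    (hsub : ∀ j, F j ⊆ F jJ)
    (L : ((Fin k → ℝ) → ℝ) →ₗ[ℝ] ℝ)
    (n : ℕ) (x : Fin n → (Fin k → ℝ)) (σ : (Fin k → ℝ) → ℝ) (hσ : ∀ y, 0 < σ y)
    (P : ((Fin k → ℝ) → ℝ) → Measure Ω)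
    (hP : ∀ f ∈ F jJ, IsProbabilityMeasure (P f))
    (cl cu : Fin J → Ω → ℝ)
    (hint : ∀ j, ∀ f ∈ F jJ, Integrable (cl j) (P f) ∧ Integrable (cu j) (P f))
    (hlo : ∀ j, ∀ f ∈ F j,
      ∫ ω, (L f - cl j ω) ∂(P f) ≤ ordModL n x σ L δ' (F jJ) (F j))
    (hup : ∀ j, ∀ f ∈ F j,
      ∫ ω, (cu j ω - L f) ∂(P f) ≤ ordModL n x σ L δ' (F j) (F jJ)) :
    ∀ j, ∀ f ∈ F j,
      ∫ ω, ((Finset.univ.inf' ⟨jJ, Finset.mem_univ jJ⟩ fun ℓ => cu ℓ ω) -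
            (Finset.univ.sup' ⟨jJ, Finset.mem_univ jJ⟩ fun ℓ => cl ℓ ω)) ∂(P f)
        ≤ 2 * δ' / δ * betModL n x σ L δ (F j) (F jJ) := by
  intro j f hf
  have hδ'pos : 0 < δ' := lt_of_lt_of_le hδpos hδδ'
  have hfJ : f ∈ F jJ := hsub j hf
  haveI := hP f hfJ
  have hinf : Integrable
      (fun ω => Finset.univ.inf' ⟨jJ, Finset.mem_univ jJ⟩ fun ℓ => cu ℓ ω) (P f) :=
    integrable_finset_inf' _ _ (fun i _ => (hint i f hfJ).2)
  have hsup : Integrable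
      (fun ω => Finset.univ.sup' ⟨jJ, Finset.mem_univ jJ⟩ fun ℓ => cl ℓ ω) (P f) :=
    integrable_finset_sup' _ _ (fun i _ => (hint i f hfJ).1)
  have hbound : ∀ ℓ : Fin J,
      ∫ ω, ((Finset.univ.inf' ⟨jJ, Finset.mem_univ jJ⟩ fun ℓ => cu ℓ ω) -
            (Finset.univ.sup' ⟨jJ, Finset.mem_univ jJ⟩ fun ℓ => cl ℓ ω)) ∂(P f)
        ≤ (∫ ω, (cu ℓ ω - L f) ∂(P f)) + ∫ ω, (L f - cl ℓ ω) ∂(P f) := by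
    intro ℓ
    have h1 : ∫ ω, ((Finset.univ.inf' ⟨jJ, Finset.mem_univ jJ⟩ fun ℓ => cu ℓ ω) -
            (Finset.univ.sup' ⟨jJ, Finset.mem_univ jJ⟩ fun ℓ => cl ℓ ω)) ∂(P f)
        ≤ ∫ ω, (cu ℓ ω - cl ℓ ω) ∂(P f) := by
      refine integral_mono (hinf.sub hsup) ((hint ℓ f hfJ).2.sub (hint ℓ f hfJ).1)
        (fun ω => sub_le_sub ?_ ?_)
      · exact Finset.inf'_le (fun ℓ => cu ℓ ω) (Finset.mem_univ ℓ)
      · exact Finset.le_sup' (fun ℓ => cl ℓ ω) (Finset.mem_univ ℓ)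
    have h2 : ∫ ω, (cu ℓ ω - cl ℓ ω) ∂(P f)
        = (∫ ω, (cu ℓ ω - L f) ∂(P f)) + ∫ ω, (L f - cl ℓ ω) ∂(P f) := by
      have hA : Integrable (fun ω => cu ℓ ω - L f) (P f) :=
        (hint ℓ f hfJ).2.sub (integrable_const _)
      have hB : Integrable (fun ω => L f - cl ℓ ω) (P f) :=
        (integrable_const _).sub (hint ℓ f hfJ).1
      rw [← integral_add hA hB]
      refine integral_congr_ae (Eventually.of_forall fun ω => ?_)
      ring
    linarith
  set S : Set ℝ := {d : ℝ | ∃ f' ∈ F j, ∃ g ∈ F jJ,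
    (∑ i, ((g (x i) - f' (x i)) / σ (x i)) ^ 2) ≤ δ ^ 2 ∧ d = |L g - L f'|} with hS
  have hbet : betModL n x σ L δ (F j) (F jJ) = sSup S := rfl
  by_cases hB : BddAbove S
  · -- main case
    set t : ℝ := δ / δ' with htdef
    have ht0 : 0 < t := div_pos hδpos hδ'pos
    have ht1 : t ≤ 1 := (div_le_one hδ'pos).mpr hδδ'
    have core : ∀ p ∈ F j, ∀ w ∈ F jJ,
        (∑ i, ((w (x i) - p (x i)) / σ (x i)) ^ 2) ≤ δ' ^ 2 →
        t * |L w - L p| ∈ S := by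
      intro p hp w hw hc
      refine ⟨p, hp, (1 - t) • p + t • w,
        hconv jJ (hsub j hp) hw (by linarith) ht0.le (by ring), ?_, ?_⟩
      · have heq : ∀ i, ((((1 - t) • p + t • w) (x i) - p (x i)) / σ (x i)) ^ 2
            = t ^ 2 * ((w (x i) - p (x i)) / σ (x i)) ^ 2 := by
          intro i
          simp only [Pi.add_apply, Pi.smul_apply, smul_eq_mul]
          rw [show (1 - t) * p (x i) + t * w (x i) - p (x i) = t * (w (x i) - p (x i)) by ring,
            mul_div_assoc, mul_pow]
        rw [Finset.sum_congr rfl (fun i _ => heq i), ← Finset.mul_sum]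
        calc t ^ 2 * ∑ i, ((w (x i) - p (x i)) / σ (x i)) ^ 2
            ≤ t ^ 2 * δ' ^ 2 := by
              exact mul_le_mul_of_nonneg_left hc (sq_nonneg t)
          _ = δ ^ 2 := by
              rw [← mul_pow, htdef, div_mul_cancel₀ _ (ne_of_gt hδ'pos)]
      · have hL : L ((1 - t) • p + t • w) - L p = t * (L w - L p) := by
          rw [map_add, LinearMap.map_smul, LinearMap.map_smul]
          simp only [smul_eq_mul]
          ring
        rw [hL, abs_mul, abs_of_pos ht0]
    have hord1 : ordModL n x σ L δ' (F j) (F jJ) ≤ sSup S / t := by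
      refine csSup_le ⟨0, f, hf, f, hfJ, by simp [sq_nonneg], by simp⟩ ?_
      rintro d ⟨p, hp, w, hw, hc, rfl⟩
      have h1 : t * |L w - L p| ≤ sSup S := le_csSup hB (core p hp w hw hc)
      have h2 : L w - L p ≤ |L w - L p| := le_abs_self _
      rw [le_div_iff₀ ht0]
      nlinarith
    have hord2 : ordModL n x σ L δ' (F jJ) (F j) ≤ sSup S / t := by
      refine csSup_le ⟨0, f, hfJ, f, hf, by simp [sq_nonneg], by simp⟩ ?_
      rintro d ⟨p, hp, w, hw, hc, rfl⟩
      have hc' : (∑ i, ((p (x i) - w (x i)) / σ (x i)) ^ 2) ≤ δ' ^ 2 := by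
        refine le_trans (le_of_eq (Finset.sum_congr rfl fun i _ => ?_)) hc
        rw [show p (x i) - w (x i) = -(w (x i) - p (x i)) by ring, neg_div, neg_sq]
      have h1 : t * |L p - L w| ≤ sSup S := le_csSup hB (core w hw p hp hc')
      have h2 : L w - L p ≤ |L p - L w| := by
        rw [abs_sub_comm]
        exact le_abs_self _
      rw [le_div_iff₀ ht0]
      nlinarith
    have hcoef : sSup S / t + sSup S / t = 2 * δ' / δ * sSup S := by
      rw [htdef]
      field_simp
      ring
    calc ∫ ω, ((Finset.univ.inf' ⟨jJ, Finset.mem_univ jJ⟩ fun ℓ => cu ℓ ω) -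
            (Finset.univ.sup' ⟨jJ, Finset.mem_univ jJ⟩ fun ℓ => cl ℓ ω)) ∂(P f)
        ≤ (∫ ω, (cu j ω - L f) ∂(P f)) + ∫ ω, (L f - cl j ω) ∂(P f) := hbound j
      _ ≤ sSup S / t + sSup S / t :=
          add_le_add (le_trans (hup j f hf) hord1) (le_trans (hlo j f hf) hord2)
      _ = 2 * δ' / δ * betModL n x σ L δ (F j) (F jJ) := by rw [hbet]; exact hcoef
  · -- degenerate case: sSup S = 0 and the ordered modulus over (F jJ, F jJ) is unbounded
    have hδsq : δ ^ 2 ≤ δ' ^ 2 := pow_le_pow_left₀ hδpos.le hδδ' 2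
    have hordJJ : ¬ BddAbove {d : ℝ | ∃ f' ∈ F jJ, ∃ g ∈ F jJ,
        (∑ i, ((g (x i) - f' (x i)) / σ (x i)) ^ 2) ≤ δ' ^ 2 ∧ d = L g - L f'} := by
      intro ⟨M, hM⟩
      refine hB ⟨M, ?_⟩
      rintro b ⟨p, hp, w, hw, hc, rfl⟩
      have hc1 : (∑ i, ((w (x i) - p (x i)) / σ (x i)) ^ 2) ≤ δ' ^ 2 := le_trans hc hδsq
      have hc2 : (∑ i, ((p (x i) - w (x i)) / σ (x i)) ^ 2) ≤ δ' ^ 2 := by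
        refine le_trans (le_of_eq (Finset.sum_congr rfl fun i _ => ?_)) hc1
        rw [show p (x i) - w (x i) = -(w (x i) - p (x i)) by ring, neg_div, neg_sq]
      have hm1 : L w - L p ≤ M := hM ⟨p, hsub j hp, w, hw, hc1, rfl⟩
      have hm2 : L p - L w ≤ M := hM ⟨w, hw, p, hsub j hp, hc2, rfl⟩
      rcases abs_cases (L w - L p) with ⟨h, _⟩ | ⟨h, _⟩
      · rw [h]; exact hm1
      · rw [h]; linarith
    have hzero : ordModL n x σ L δ' (F jJ) (F jJ) = 0 :=
      Real.sSup_of_not_bddAbove hordJJ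
    have h1 : ∫ ω, (cu jJ ω - L f) ∂(P f) ≤ 0 := by
      have := hup jJ f hfJ
      rwa [hzero] at this
    have h2 : ∫ ω, (L f - cl jJ ω) ∂(P f) ≤ 0 := by
      have := hlo jJ f hfJ
      rwa [hzero] at this
    have hS0 : sSup S = 0 := Real.sSup_of_not_bddAbove hB
    rw [hbet, hS0, mul_zero]
    linarith [hbound jJ]

/-- the Bonferroni confidence interval, obtained by intersecting the `J`
one-sided CIs with level `α/(2J)`, has worst-case expected length over `F_j` bounded by
`(2 z_{1−α/(2J)} / z_{1−α/2}) ω₊(z_{1−α/2}, F_j, F_J)`. -/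
theorem stmt_7 {k : ℕ} (Ω : Type*) [MeasurableSpace Ω]
    (J : ℕ) (hJ : 0 < J) (α : ℝ) (hα0 : 0 < α) (hα1 : α < 1)
    (F : Fin J → Set ((Fin k → ℝ) → ℝ)) (jJ : Fin J)
    (hne : ∀ j, (F j).Nonempty) (hconv : ∀ j, Convex ℝ (F j))
    (hsub : ∀ j, F j ⊆ F jJ)
    (L : ((Fin k → ℝ) → ℝ) →ₗ[ℝ] ℝ)
    (n : ℕ) (x : Fin n → (Fin k → ℝ)) (σ : (Fin k → ℝ) → ℝ) (hσ : ∀ y, 0 < σ y)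
    (P : ((Fin k → ℝ) → ℝ) → Measure Ω)
    (hP : ∀ f ∈ F jJ, IsProbabilityMeasure (P f))
    (cl cu : Fin J → Ω → ℝ)
    (hint : ∀ j, ∀ f ∈ F jJ, Integrable (cl j) (P f) ∧ Integrable (cu j) (P f))
    (hlo : ∀ j, ∀ f ∈ F j,
      ∫ ω, (L f - cl j ω) ∂(P f)
        ≤ ordModL n x σ L (gaussQuantile (1 - α / (2 * J))) (F jJ) (F j))
    (hup : ∀ j, ∀ f ∈ F j,
      ∫ ω, (cu j ω - L f) ∂(P f)
        ≤ ordModL n x σ L (gaussQuantile (1 - α / (2 * J))) (F j) (F jJ)) :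
    ∀ j, ∀ f ∈ F j,
      ∫ ω, ((Finset.univ.inf' ⟨jJ, Finset.mem_univ jJ⟩ fun ℓ => cu ℓ ω) -
            (Finset.univ.sup' ⟨jJ, Finset.mem_univ jJ⟩ fun ℓ => cl ℓ ω)) ∂(P f)
        ≤ 2 * gaussQuantile (1 - α / (2 * J)) / gaussQuantile (1 - α / 2) *
            betModL n x σ L (gaussQuantile (1 - α / 2)) (F j) (F jJ) := by
  have hJ1 : (1:ℝ) ≤ J := by exact_mod_cast hJ
  have hJ0 : (0:ℝ) < J := by positivity
  have hq : (1:ℝ)/2 < 1 - α/2 := by linarith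
  have hq1 : 1 - α/2 < 1 := by linarith
  have hle : 1 - α/2 ≤ 1 - α/(2*(J:ℝ)) := by
    have h1 : α/(2*(J:ℝ)) ≤ α/2 := by
      apply div_le_div_of_nonneg_left hα0.le two_pos
      linarith
    linarith
  have hq1' : 1 - α/(2*(J:ℝ)) < 1 := by
    have : (0:ℝ) < α/(2*(J:ℝ)) := by positivity
    linarith
  exact stmt_7_aux Ω J hJ (gaussQuantile (1 - α/2)) (gaussQuantile (1 - α/(2*J)))
    (gaussQuantile_pos hq hq1) (gaussQuantile_mono hq hle hq1')
    F jJ hne hconv hsub L n x σ hσ P hP cl cu hint hlo hup
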